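/- Let A_1,...,A_d be complex numbers with |A_j| ≤ 1 for all j and ∑_{j=1}^d A_j = 0, and let J ⊆ {1,...,d} be nonempty. Define ΔA := (1/d)∑_{j=1}^d |A_j|² and ΔA_J := (1/|J|)∑_{j∈J}|A_j|² - (1/|J|²)|∑_{j∈J}A_j|². Then |ΔA_J - ΔA| ≤ (1/|J| - 1/d)·|J| + (d - |J|)²/|J|² + (d - |J|)/d. -/

import Mathlib

/-- Quantitative comparison of the microcanonical EEV variance `ΔA_J` with the full
variance `ΔA` for traceless `A` with `|A_j| ≤ 1`. -/
theorem stmt_1 (d : ℕ) (A : Fin d → ℂ) (hA : ∀ j, ‖A j‖ ≤ 1)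
    (htr : ∑ j, A j = 0) (J : Finset (Fin d)) (hJ : J.Nonempty) :
    |((1 / (J.card : ℝ)) * ∑ j ∈ J, ‖A j‖ ^ 2
        - (1 / (J.card : ℝ) ^ 2) * ‖∑ j ∈ J, A j‖ ^ 2)
      - (1 / (d : ℝ)) * ∑ j, ‖A j‖ ^ 2|
      ≤ (1 / (J.card : ℝ) - 1 / (d : ℝ)) * J.card
        + ((d : ℝ) - J.card) ^ 2 / (J.card : ℝ) ^ 2
        + ((d : ℝ) - J.card) / (d : ℝ) := by
  set kr : ℝ := (J.card : ℝ) with hkr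
  set dr : ℝ := (d : ℝ) with hdr
  have hkpos : 0 < kr := by
    have h := Finset.card_pos.mpr hJ
    rw [hkr]; exact_mod_cast h
  have hkd : J.card ≤ d := by
    simpa using J.card_le_card (Finset.subset_univ J)
  have hkdr : kr ≤ dr := by rw [hkr, hdr]; exact_mod_cast hkd
  have hdpos : 0 < dr := lt_of_lt_of_le hkpos hkdr
  set S : ℝ := ∑ j ∈ J, ‖A j‖ ^ 2 with hS
  set T : ℝ := ∑ j, ‖A j‖ ^ 2 with hT
  set N : ℝ := ‖∑ j ∈ J, A j‖ ^ 2 with hN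
  have hcompl : (Jᶜ.card : ℝ) = dr - kr := by
    rw [Finset.card_compl, Fintype.card_fin, Nat.cast_sub hkd]
  have hsq : ∀ j, ‖A j‖ ^ 2 ≤ 1 := fun j => by
    have := hA j
    nlinarith [norm_nonneg (A j)]
  have hsqnn : ∀ j ∈ (Jᶜ : Finset (Fin d)), (0:ℝ) ≤ ‖A j‖ ^ 2 := fun j _ => by positivity
  -- S bounds
  have hS0 : 0 ≤ S := Finset.sum_nonneg fun j _ => by positivity
  have hSk : S ≤ kr := by
    calc S ≤ ∑ _j ∈ J, (1:ℝ) := Finset.sum_le_sum fun j _ => hsq j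
    _ = kr := by simp [hkr]
  -- T - S bounds
  have hsplit : T = S + ∑ j ∈ Jᶜ, ‖A j‖ ^ 2 := (Finset.sum_add_sum_compl J _).symm
  have hTS0 : S ≤ T := by
    rw [hsplit]
    have : (0:ℝ) ≤ ∑ j ∈ Jᶜ, ‖A j‖ ^ 2 := Finset.sum_nonneg hsqnn
    linarith
  have hTSd : T - S ≤ dr - kr := by
    rw [hsplit]
    have : ∑ j ∈ Jᶜ, ‖A j‖ ^ 2 ≤ ∑ _j ∈ Jᶜ, (1:ℝ) :=
      Finset.sum_le_sum fun j _ => hsq j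
    simp only [Finset.sum_const, nsmul_eq_mul, mul_one] at this
    rw [hcompl] at this
    linarith
  -- N bounds
  have hsumJ : ∑ j ∈ J, A j = -∑ j ∈ Jᶜ, A j := by
    have := Finset.sum_add_sum_compl J A
    rw [htr] at this
    linear_combination this
  have hnormJ : ‖∑ j ∈ J, A j‖ ≤ dr - kr := by
    rw [hsumJ, norm_neg]
    calc ‖∑ j ∈ Jᶜ, A j‖ ≤ ∑ j ∈ Jᶜ, ‖A j‖ := norm_sum_le _ _
    _ ≤ ∑ _j ∈ Jᶜ, (1:ℝ) := Finset.sum_le_sum fun j _ => hA j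
    _ = dr - kr := by simp [hcompl]
  have hN0 : 0 ≤ N := by positivity
  have hNd : N ≤ (dr - kr) ^ 2 := by
    rw [hN]
    have h0 : (0:ℝ) ≤ ‖∑ j ∈ J, A j‖ := norm_nonneg _
    nlinarith
  -- term bounds
  have hinv : (0:ℝ) ≤ 1 / kr - 1 / dr := by
    have := one_div_le_one_div_of_le hkpos hkdr
    linarith
  have h1 : 0 ≤ (1 / kr - 1 / dr) * S ∧ (1 / kr - 1 / dr) * S ≤ (1 / kr - 1 / dr) * kr :=
    ⟨mul_nonneg hinv hS0, mul_le_mul_of_nonneg_left hSk hinv⟩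
  have h2 : 0 ≤ (1 / dr) * (T - S) ∧ (1 / dr) * (T - S) ≤ (dr - kr) / dr := by
    constructor
    · apply mul_nonneg (by positivity); linarith
    · rw [one_div, inv_mul_eq_div]
      gcongr
  have h3 : 0 ≤ (1 / kr ^ 2) * N ∧ (1 / kr ^ 2) * N ≤ (dr - kr) ^ 2 / kr ^ 2 := by
    constructor
    · positivity
    · rw [one_div, inv_mul_eq_div]
      gcongr
  have hid : (1 / kr) * S - (1 / kr ^ 2) * N - (1 / dr) * T
      = (1 / kr - 1 / dr) * S - (1 / dr) * (T - S) - (1 / kr ^ 2) * N := by ring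
  rw [abs_le]
  constructor
  · rw [hid]; linarith [h1.1, h2.2, h3.2]
  · rw [hid]; linarith [h1.2, h2.1, h3.1]
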